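/- One-step contraction of the mADBCD iteration: with notation as in the previous statement, define the next two iterates by x⁽ᵏ⁺¹⁾ = x⁽ᵏ⁾ + (ηₖᵀsₖ/‖Aηₖ‖²) ηₖ + β(x⁽ᵏ⁾ − x⁽ᵏ⁻¹⁾) where sₖ = Aᵀ(b − Ax⁽ᵏ⁾) ≠ 0 and β ≥ 0. Then ‖x⁽ᵏ⁺¹⁾ − x⋆‖²_{AᵀA} ≤ (1 + 3β + 2β² − (3β+1)|τₖ|σ_min(A)²/(n σ_max(A_{τₖ})²)) ‖x⁽ᵏ⁾ − x⋆‖²_{AᵀA} + (2β² + β) ‖x⁽ᵏ⁻¹⁾ − x⋆‖²_{AᵀA}. -/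
import Mathlib
open Matrix BigOperators

noncomputable def sqnorm {k : Type*} [Fintype k] (v : k → ℝ) : ℝ := ∑ i, v i ^ 2
noncomputable def enorm' {k : Type*} [Fintype k] (v : k → ℝ) : ℝ := Real.sqrt (sqnorm v)
noncomputable def sigmaMin {m n : Type*} [Fintype m] [Fintype n] (G : Matrix m n ℝ) : ℝ :=
  sInf {r | ∃ x : n → ℝ, enorm' x = 1 ∧ r = enorm' (G.mulVec x)}
noncomputable def sigmaMax {m n : Type*} [Fintype m] [Fintype n] (G : Matrix m n ℝ) : ℝ :=
  sSup {r | ∃ x : n → ℝ, enorm' x = 1 ∧ r = enorm' (G.mulVec x)}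

section helpers
variable {k : Type*} [Fintype k]

lemma sqnorm_nonneg (v : k → ℝ) : 0 ≤ sqnorm v :=
  Finset.sum_nonneg fun _ _ => sq_nonneg _
lemma sqnorm_eq_zero {v : k → ℝ} (h : sqnorm v = 0) : v = 0 := by
  funext i
  have := (Finset.sum_eq_zero_iff_of_nonneg (fun i _ => sq_nonneg (v i))).1 h i (Finset.mem_univ i)
  exact pow_eq_zero_iff (n := 2) (by norm_num) |>.1 this
lemma enorm'_nonneg (v : k → ℝ) : 0 ≤ enorm' v := Real.sqrt_nonneg _
lemma enorm'_sq (v : k → ℝ) : enorm' v ^ 2 = sqnorm v := Real.sq_sqrt (sqnorm_nonneg v)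
lemma sqnorm_smul (c : ℝ) (v : k → ℝ) : sqnorm (c • v) = c ^ 2 * sqnorm v := by
  simp [sqnorm, Finset.mul_sum, mul_pow]
lemma enorm'_smul (c : ℝ) (v : k → ℝ) : enorm' (c • v) = |c| * enorm' v := by
  rw [enorm', sqnorm_smul, Real.sqrt_mul (sq_nonneg c), Real.sqrt_sq_eq_abs]; rfl
lemma enorm'_pos {v : k → ℝ} (hv : v ≠ 0) : 0 < enorm' v := by
  rcases (Real.sqrt_nonneg (sqnorm v)).lt_or_eq with h | h
  · exact h
  · exfalso; apply hv; apply sqnorm_eq_zero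
    exact le_antisymm (Real.sqrt_eq_zero'.mp h.symm) (sqnorm_nonneg v)
lemma sqnorm_eq_dot (v : k → ℝ) : sqnorm v = v ⬝ᵥ v := by
  simp [sqnorm, dotProduct, sq]
lemma sqnorm_add (v w : k → ℝ) : sqnorm (v + w) = sqnorm v + 2 * (v ⬝ᵥ w) + sqnorm w := by
  simp only [sqnorm, dotProduct, Pi.add_apply, Finset.mul_sum, ← Finset.sum_add_distrib]
  exact Finset.sum_congr rfl fun i _ => by ring
lemma sqnorm_neg (v : k → ℝ) : sqnorm (-v) = sqnorm v := by simp [sqnorm]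
lemma cauchy_dot (v w : k → ℝ) : (v ⬝ᵥ w) ^ 2 ≤ sqnorm v * sqnorm w := by
  simpa [sqnorm, dotProduct] using Finset.sum_mul_sq_le_sq_mul_sq Finset.univ v w
end helpers

section sigma
variable {p q : Type*} [Fintype p] [Fintype q] (G : Matrix p q ℝ)

lemma sigmaMin_nonneg : 0 ≤ sigmaMin G :=
  Real.sInf_nonneg (by rintro r ⟨y, -, rfl⟩; exact enorm'_nonneg _)

lemma sigmaMax_nonneg : 0 ≤ sigmaMax G :=
  Real.sSup_nonneg (by rintro r ⟨y, -, rfl⟩; exact enorm'_nonneg _)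

lemma sigma_set_bddAbove :
    BddAbove {r | ∃ y : q → ℝ, enorm' y = 1 ∧ r = enorm' (G.mulVec y)} := by
  refine ⟨Real.sqrt (∑ i, ∑ j, G i j ^ 2), ?_⟩
  rintro r ⟨y, hy, rfl⟩
  apply Real.sqrt_le_sqrt
  have hy2 : sqnorm y = 1 := by rw [← enorm'_sq, hy]; norm_num
  have key : ∀ i, (G.mulVec y) i ^ 2 ≤ (∑ j, G i j ^ 2) * sqnorm y := fun i => by
    simpa [Matrix.mulVec, dotProduct, sqnorm] using
      Finset.sum_mul_sq_le_sq_mul_sq Finset.univ (fun j => G i j) y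
  calc sqnorm (G.mulVec y) ≤ ∑ i, (∑ j, G i j ^ 2) * sqnorm y :=
        Finset.sum_le_sum fun i _ => key i
    _ = ∑ i, ∑ j, G i j ^ 2 := by rw [hy2]; simp

lemma sigmaMin_mul_le (x : q → ℝ) :
    sigmaMin G ^ 2 * sqnorm x ≤ sqnorm (G.mulVec x) := by
  rcases eq_or_ne x 0 with rfl | hx
  · simp [sqnorm, Matrix.mulVec_zero]
  · have hr : 0 < enorm' x := enorm'_pos hx
    have hbdd : BddBelow {r | ∃ y : q → ℝ, enorm' y = 1 ∧ r = enorm' (G.mulVec y)} :=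
      ⟨0, by rintro r ⟨y, -, rfl⟩; exact enorm'_nonneg _⟩
    have h1 : sigmaMin G ≤ enorm' (G.mulVec ((enorm' x)⁻¹ • x)) :=
      csInf_le hbdd ⟨_, by rw [enorm'_smul, abs_inv, abs_of_pos hr, inv_mul_cancel₀ hr.ne'], rfl⟩
    rw [Matrix.mulVec_smul, enorm'_smul, abs_inv, abs_of_pos hr, inv_mul_eq_div] at h1
    have h2 : sigmaMin G * enorm' x ≤ enorm' (G.mulVec x) := (le_div_iff₀ hr).mp h1
    calc sigmaMin G ^ 2 * sqnorm x = (sigmaMin G * enorm' x) ^ 2 := by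
          rw [mul_pow, enorm'_sq]
      _ ≤ enorm' (G.mulVec x) ^ 2 :=
          pow_le_pow_left₀ (mul_nonneg (sigmaMin_nonneg G) (enorm'_nonneg x)) h2 2
      _ = sqnorm (G.mulVec x) := enorm'_sq _

lemma sqnorm_mulVec_le (x : q → ℝ) :
    sqnorm (G.mulVec x) ≤ sigmaMax G ^ 2 * sqnorm x := by
  rcases eq_or_ne x 0 with rfl | hx
  · simp [sqnorm, Matrix.mulVec_zero]
  · have hr : 0 < enorm' x := enorm'_pos hx
    have h1 : enorm' (G.mulVec ((enorm' x)⁻¹ • x)) ≤ sigmaMax G :=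
      le_csSup (sigma_set_bddAbove G)
        ⟨_, by rw [enorm'_smul, abs_inv, abs_of_pos hr, inv_mul_cancel₀ hr.ne'], rfl⟩
    rw [Matrix.mulVec_smul, enorm'_smul, abs_inv, abs_of_pos hr, inv_mul_eq_div,
      div_le_iff₀ hr] at h1
    calc sqnorm (G.mulVec x) = enorm' (G.mulVec x) ^ 2 := (enorm'_sq _).symm
      _ ≤ (sigmaMax G * enorm' x) ^ 2 := pow_le_pow_left₀ (enorm'_nonneg _) h1 2
      _ = sigmaMax G ^ 2 * sqnorm x := by rw [mul_pow, enorm'_sq]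
end sigma

set_option maxHeartbeats 1000000 in
theorem stmt_14 {m n : ℕ} (A : Matrix (Fin m) (Fin n) ℝ) (hrank : A.rank = n)
    (b : Fin m → ℝ) (xstar : Fin n → ℝ)
    (hstar : (Aᵀ * A).mulVec xstar = Aᵀ.mulVec b)
    (β : ℝ) (hβ : 0 ≤ β) (xk xkm : Fin n → ℝ) :
    let sk : Fin n → ℝ := Aᵀ.mulVec (b - A.mulVec xk)
    let τk : Finset (Fin n) := Finset.univ.filter fun j => (sk j) ^ 2 ≥ sqnorm sk / n
    let ηk : Fin n → ℝ := ∑ j ∈ τk, sk j • (Pi.single j 1 : Fin n → ℝ)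
    let xkp : Fin n → ℝ := xk + (ηk ⬝ᵥ sk / sqnorm (A.mulVec ηk)) • ηk + β • (xk - xkm)
    let Aτ : Matrix (Fin m) ↥τk ℝ := A.submatrix id (fun j : ↥τk => (j : Fin n))
    sk ≠ 0 →
      sqnorm (A.mulVec (xkp - xstar)) ≤
        (1 + 3 * β + 2 * β ^ 2 -
            (3 * β + 1) * ((τk.card : ℝ) * sigmaMin A ^ 2 / (n * sigmaMax Aτ ^ 2))) *
          sqnorm (A.mulVec (xk - xstar)) +
        (2 * β ^ 2 + β) * sqnorm (A.mulVec (xkm - xstar)) := by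
  intro sk τk ηk xkp Aτ hs
  have hsk : sk = Aᵀ.mulVec (b - A.mulVec xk) := rfl
  have hτ : τk = Finset.univ.filter (fun j => (sk j) ^ 2 ≥ sqnorm sk / n) := rfl
  have hηdef : ηk = ∑ j ∈ τk, sk j • (Pi.single j 1 : Fin n → ℝ) := rfl
  have hxkp : xkp = xk + (ηk ⬝ᵥ sk / sqnorm (A.mulVec ηk)) • ηk + β • (xk - xkm) := rfl
  have hAτdef : Aτ = A.submatrix id (fun j : ↥τk => (j : Fin n)) := rfl
  clear_value sk τk ηk xkp Aτ
  rcases Nat.eq_zero_or_pos n with hn | hn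
  · subst hn; exact absurd (funext fun j => j.elim0) hs
  have hnR : (0:ℝ) < n := by exact_mod_cast hn
  -- abbreviations
  set γ : ℝ := (τk.card : ℝ) * sigmaMin A ^ 2 / (n * sigmaMax Aτ ^ 2) with hγ
  set E : Fin m → ℝ := A.mulVec (xk - xstar) with hE
  set F : Fin m → ℝ := A.mulVec (xkm - xstar) with hF
  set Q : ℝ := sqnorm (A.mulVec ηk) with hQ
  set α : ℝ := ηk ⬝ᵥ sk / Q with hα
  set P : Fin m → ℝ := E + α • A.mulVec ηk with hP
  clear_value γ E F Q α P
  -- basic matrix facts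
  have hdot : ∀ v w : Fin n → ℝ, A.mulVec v ⬝ᵥ A.mulVec w = (Aᵀ * A).mulVec v ⬝ᵥ w := by
    intro v w
    rw [Matrix.dotProduct_mulVec, ← Matrix.mulVec_transpose, Matrix.mulVec_mulVec]
  have h1 : (Aᵀ * A).mulVec (xk - xstar) = -sk := by
    rw [Matrix.mulVec_sub, hstar, hsk, Matrix.mulVec_sub, Matrix.mulVec_mulVec, neg_sub]
  have hEAη : E ⬝ᵥ A.mulVec ηk = -(sk ⬝ᵥ ηk) := by
    rw [hE, hdot, h1, neg_dotProduct]
  -- η facts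
  have hηj : ∀ i, ηk i = if i ∈ τk then sk i else 0 := by
    intro i
    rw [hηdef, Finset.sum_apply]
    simp only [Pi.smul_apply, Pi.single_apply, smul_eq_mul, mul_ite, mul_one, mul_zero]
    simp [Finset.sum_ite_eq]
  have hskη : sk ⬝ᵥ ηk = ∑ j ∈ τk, sk j ^ 2 := by
    rw [dotProduct]
    calc ∑ i, sk i * ηk i = ∑ i, if i ∈ τk then sk i ^ 2 else 0 :=
          Finset.sum_congr rfl fun i _ => by rw [hηj i]; split <;> ring
      _ = ∑ j ∈ τk, sk j ^ 2 := by rw [Finset.sum_ite_mem, Finset.univ_inter]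
  have hskη_nonneg : 0 ≤ sk ⬝ᵥ ηk := hskη ▸ Finset.sum_nonneg fun _ _ => sq_nonneg _
  set t : ℝ := sk ⬝ᵥ ηk with ht
  clear_value t
  have hlow : (τk.card : ℝ) * (sqnorm sk / n) ≤ t := by
    rw [hskη]
    have hmemle : ∀ j ∈ τk, sqnorm sk / n ≤ sk j ^ 2 := by
      intro j hj
      rw [hτ, Finset.mem_filter] at hj
      exact hj.2
    have := Finset.card_nsmul_le_sum τk (fun j => sk j ^ 2) (sqnorm sk / n) hmemle
    simpa [nsmul_eq_mul] using this
  have hAηAτ : A.mulVec ηk = Aτ.mulVec (fun j : ↥τk => sk (j : Fin n)) := by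
    funext i
    rw [hAτdef]
    show ∑ j, A i j * ηk j = ∑ j : ↥τk, A i (j : Fin n) * sk (j : Fin n)
    calc ∑ j, A i j * ηk j = ∑ j, if j ∈ τk then A i j * sk j else 0 :=
          Finset.sum_congr rfl fun j _ => by rw [hηj j]; split <;> ring
      _ = ∑ j ∈ τk, A i j * sk j := by rw [Finset.sum_ite_mem, Finset.univ_inter]
      _ = ∑ j : ↥τk, A i (j : Fin n) * sk (j : Fin n) :=
          (Finset.sum_coe_sort τk (fun j => A i j * sk j)).symm
  have hsqη : sqnorm (fun j : ↥τk => sk (j : Fin n)) = t := by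
    rw [hskη, sqnorm]
    exact Finset.sum_coe_sort τk (fun j => sk j ^ 2)
  have hQle : Q ≤ sigmaMax Aτ ^ 2 * t := by
    rw [hQ, hAηAτ, ← hsqη]
    exact sqnorm_mulVec_le Aτ _
  have hK5 : sigmaMin A ^ 2 * sqnorm E ≤ sqnorm sk := by
    have hEd : sqnorm E = -(sk ⬝ᵥ (xk - xstar)) := by
      rw [sqnorm_eq_dot, hE, hdot, h1, neg_dotProduct]
    have hc : (sqnorm E) ^ 2 ≤ sqnorm sk * sqnorm (xk - xstar) := by
      rw [show (sqnorm E) ^ 2 = (sk ⬝ᵥ (xk - xstar)) ^ 2 by rw [hEd]; ring]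
      exact cauchy_dot _ _
    have hm : sigmaMin A ^ 2 * sqnorm (xk - xstar) ≤ sqnorm E := hE ▸ sigmaMin_mul_le A _
    rcases (sqnorm_nonneg E).eq_or_lt with h0 | h0
    · rw [← h0, mul_zero]; exact sqnorm_nonneg sk
    · nlinarith [mul_le_mul_of_nonneg_left hm (sqnorm_nonneg sk),
        mul_le_mul_of_nonneg_left hc (sq_nonneg (sigmaMin A)), h0]
  -- orthogonality
  have hPE : P ⬝ᵥ E = sqnorm P := by
    rcases eq_or_ne Q 0 with hQ0 | hQ0
    · have hα0 : α = 0 := by rw [hα, hQ0, div_zero]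
      rw [hP, hα0, zero_smul, add_zero, ← sqnorm_eq_dot]
    · have h2 : A.mulVec ηk ⬝ᵥ A.mulVec ηk = Q := by rw [hQ, sqnorm_eq_dot]
      have h3 : E ⬝ᵥ A.mulVec ηk = -(ηk ⬝ᵥ sk) := by rw [hEAη, dotProduct_comm, ht]
      have hPAη : P ⬝ᵥ A.mulVec ηk = 0 := by
        rw [hP, add_dotProduct, smul_dotProduct, h2, h3, hα, smul_eq_mul,
          div_mul_cancel₀ _ hQ0]
        ring
      have hEP : E = P - α • A.mulVec ηk := by rw [hP, add_sub_cancel_right]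
      rw [hEP, dotProduct_sub, dotProduct_smul, hPAη, smul_eq_mul, mul_zero,
        sub_zero, ← sqnorm_eq_dot]
  -- nonempty active set with nonzero entry
  have hτne : ∃ j₀, j₀ ∈ τk ∧ sk j₀ ≠ 0 := by
    have hs2 : 0 < sqnorm sk := by
      rcases (sqnorm_nonneg sk).eq_or_lt with h | h
      · exact absurd (sqnorm_eq_zero h.symm) hs
      · exact h
    obtain ⟨j₀, -, hj₀⟩ := Finset.exists_max_image Finset.univ (fun j => sk j ^ 2)
      ⟨⟨0, hn⟩, Finset.mem_univ _⟩
    have hsum : sqnorm sk ≤ n * sk j₀ ^ 2 := by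
      calc sqnorm sk = ∑ j, sk j ^ 2 := rfl
        _ ≤ ∑ _j : Fin n, sk j₀ ^ 2 := Finset.sum_le_sum fun j _ => hj₀ j (Finset.mem_univ j)
        _ = n * sk j₀ ^ 2 := by simp [Finset.sum_const, nsmul_eq_mul]
    have hmem : j₀ ∈ τk := by
      rw [hτ, Finset.mem_filter]
      exact ⟨Finset.mem_univ _, by rw [ge_iff_le, div_le_iff₀ hnR]; linarith⟩
    refine ⟨j₀, hmem, fun h => ?_⟩
    rw [h] at hsum; norm_num at hsum; linarith
  -- main one-step contraction
  have hPle : sqnorm P ≤ (1 - γ) * sqnorm E := by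
    rcases (sqnorm_nonneg (A.mulVec ηk)).eq_or_lt with hQ0 | hQpos
    · have hAη0 : A.mulVec ηk = 0 := sqnorm_eq_zero hQ0.symm
      have hα0 : α = 0 := by rw [hα, hQ, ← hQ0, div_zero]
      have hPeqE : P = E := by rw [hP, hα0, zero_smul, add_zero]
      obtain ⟨j₀, hmem, hne⟩ := hτne
      have hηne : ηk ≠ 0 := fun h =>
        hne (by have := congrFun h j₀; rwa [hηj j₀, if_pos hmem, Pi.zero_apply] at this)
      have hσ : sigmaMin A = 0 := by
        have h1' := sigmaMin_mul_le A ηk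
        rw [hAη0] at h1'
        have h2' : sqnorm (0 : Fin m → ℝ) = 0 := by simp [sqnorm]
        rw [h2'] at h1'
        have hηpos : 0 < sqnorm ηk := by
          rcases (sqnorm_nonneg ηk).eq_or_lt with h | h
          · exact absurd (sqnorm_eq_zero h.symm) hηne
          · exact h
        have hle : sigmaMin A ^ 2 ≤ 0 := by nlinarith
        have := le_antisymm hle (sq_nonneg _)
        exact pow_eq_zero_iff (n := 2) (by norm_num) |>.1 this
      rw [hPeqE, hγ, hσ]
      norm_num
    · have hQpos' : 0 < Q := hQ ▸ hQpos
      have hαt : α = t / Q := by rw [hα, dotProduct_comm, ← ht]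
      have hPid : sqnorm P = sqnorm E - t ^ 2 / Q := by
        rw [hP, sqnorm_add, dotProduct_smul, sqnorm_smul, ← hQ, hEAη, hαt,
          smul_eq_mul]
        field_simp
        ring
      have hD : 0 < sigmaMax Aτ ^ 2 := by
        rcases (sq_nonneg (sigmaMax Aτ)).eq_or_lt with h | h
        · exfalso; rw [← h, zero_mul] at hQle; linarith
        · exact h
      have hγle : γ * sqnorm E ≤ t ^ 2 / Q := by
        have hcard : (τk.card : ℝ) * sqnorm sk ≤ n * t := by
          rw [← mul_div_assoc] at hlow
          have := (div_le_iff₀ hnR).mp hlow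
          linarith
        have hNE := sqnorm_nonneg E
        have hSn := sqnorm_nonneg sk
        have hcard0 : (0:ℝ) ≤ (τk.card : ℝ) := Nat.cast_nonneg _
        have c1 : (τk.card : ℝ) * sigmaMin A ^ 2 * (sqnorm E * Q)
            ≤ (τk.card : ℝ) * sigmaMin A ^ 2 * (sqnorm E * (sigmaMax Aτ ^ 2 * t)) := by
          apply mul_le_mul_of_nonneg_left (mul_le_mul_of_nonneg_left hQle hNE)
          exact mul_nonneg hcard0 (sq_nonneg _)
        have c2 : sigmaMin A ^ 2 * sqnorm E * ((τk.card : ℝ) * (sigmaMax Aτ ^ 2 * t))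
            ≤ sqnorm sk * ((τk.card : ℝ) * (sigmaMax Aτ ^ 2 * t)) := by
          apply mul_le_mul_of_nonneg_right hK5
          exact mul_nonneg hcard0 (mul_nonneg (sq_nonneg _) hskη_nonneg)
        have c3 : (τk.card : ℝ) * sqnorm sk * (sigmaMax Aτ ^ 2 * t)
            ≤ n * t * (sigmaMax Aτ ^ 2 * t) := by
          apply mul_le_mul_of_nonneg_right hcard
          exact mul_nonneg (sq_nonneg _) hskη_nonneg
        have hbig : (τk.card : ℝ) * sigmaMin A ^ 2 * (sqnorm E * Q)
            ≤ (n * sigmaMax Aτ ^ 2) * t ^ 2 := by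
          calc (τk.card : ℝ) * sigmaMin A ^ 2 * (sqnorm E * Q)
              ≤ (τk.card : ℝ) * sigmaMin A ^ 2 * (sqnorm E * (sigmaMax Aτ ^ 2 * t)) := c1
            _ = sigmaMin A ^ 2 * sqnorm E * ((τk.card : ℝ) * (sigmaMax Aτ ^ 2 * t)) := by ring
            _ ≤ sqnorm sk * ((τk.card : ℝ) * (sigmaMax Aτ ^ 2 * t)) := c2
            _ = (τk.card : ℝ) * sqnorm sk * (sigmaMax Aτ ^ 2 * t) := by ring
            _ ≤ n * t * (sigmaMax Aτ ^ 2 * t) := c3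
            _ = (n * sigmaMax Aτ ^ 2) * t ^ 2 := by ring
        have hpos : (0:ℝ) < n * sigmaMax Aτ ^ 2 := mul_pos hnR hD
        rw [le_div_iff₀ hQpos', hγ, div_mul_eq_mul_div, div_mul_eq_mul_div,
          div_le_iff₀ hpos]
        linarith [hbig]
      linarith [hPid, hγle]
  -- expansion with momentum
  have hdecomp : A.mulVec (xkp - xstar) = P + β • (E - F) := by
    have h4 : xkp - xstar = ((xk - xstar) + α • ηk) + β • ((xk - xstar) - (xkm - xstar)) := by
      rw [hxkp]
      funext i
      simp only [Pi.add_apply, Pi.sub_apply, Pi.smul_apply, smul_eq_mul]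
      ring
    rw [h4, hP, hE, hF]
    simp only [Matrix.mulVec_add, Matrix.mulVec_smul, Matrix.mulVec_sub]
  have hexp : sqnorm (A.mulVec (xkp - xstar))
      = sqnorm P + 2 * (β * (P ⬝ᵥ E - P ⬝ᵥ F)) + β ^ 2 * sqnorm (E - F) := by
    rw [hdecomp, sqnorm_add, dotProduct_smul, smul_eq_mul, dotProduct_sub,
      sqnorm_smul]
  have i1 : -(2 * (P ⬝ᵥ F)) ≤ sqnorm P + sqnorm F := by
    have h := sqnorm_nonneg (P + F)
    rw [sqnorm_add] at h; linarith
  have i2 : sqnorm (E - F) ≤ 2 * sqnorm E + 2 * sqnorm F := by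
    have h := sqnorm_nonneg (E + F)
    rw [sqnorm_add] at h
    have h2 : sqnorm (E - F) = sqnorm E - 2 * (E ⬝ᵥ F) + sqnorm F := by
      rw [sub_eq_add_neg, sqnorm_add, sqnorm_neg, dotProduct_neg]; ring
    linarith
  rw [hexp, hPE]
  have t1 : β * (-(2 * (P ⬝ᵥ F))) ≤ β * (sqnorm P + sqnorm F) :=
    mul_le_mul_of_nonneg_left i1 hβ
  have t2 : β ^ 2 * sqnorm (E - F) ≤ β ^ 2 * (2 * sqnorm E + 2 * sqnorm F) :=
    mul_le_mul_of_nonneg_left i2 (sq_nonneg β)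
  have t3 : (1 + 3 * β) * sqnorm P ≤ (1 + 3 * β) * ((1 - γ) * sqnorm E) :=
    mul_le_mul_of_nonneg_left hPle (by linarith)
  nlinarith [t1, t2, t3]
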